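/- For the Hegselmann–Krause system on ℝ with N = 3 agents and confidence radius r > 0, the set of equilibria equals the union of the following 13 pairwise disjoint manifolds: the line {x₁ = x₂ = x₃}; the three half-planes {x_i = x_j, x_k > x_i + r} and the three half-planes {x_i = x_j, x_k < x_i − r} (for {i,j,k} = {1,2,3} with i < j); and the six open 3-dimensional sets {x_i + r < x_j < x_k − r} for (i,j,k) ranging over permutations of (1,2,3). Equivalently, (x₁, x₂, x₃) is an equilibrium if and only if for every pair i, j, either x_i = x_j or |x_i − x_j| > r. -/
import Mathlib


/-- For the Hegselmann–Krause system on `ℝ` with `N = 3` agents and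
confidence radius `r > 0`, a configuration `(x₁, x₂, x₃)` is an equilibrium if and
only if for every pair `i, j`, either `x_i = x_j` or `|x_i − x_j| > r` (this set is
the union of the 13 pairwise disjoint manifolds enumerated in the paper). -/
theorem hegselmann_krause_equilibria_three_agents
    (r : ℝ) (hr : 0 < r) (x : Fin 3 → ℝ) :
    (∀ i : Fin 3,
      ((((Finset.univ.filter fun j => |x i - x j| ≤ r)).card : ℝ))⁻¹ *
        ∑ j ∈ Finset.univ.filter (fun j => |x i - x j| ≤ r), (x j - x i) = 0)
    ↔ (∀ i j : Fin 3, x i = x j ∨ r < |x i - x j|) := by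
  constructor
  · intro h
    have hS : ∀ i : Fin 3,
        ∑ j ∈ Finset.univ.filter (fun j => |x i - x j| ≤ r), (x j - x i) = 0 := by
      intro i
      have hmem : i ∈ Finset.univ.filter (fun j => |x i - x j| ≤ r) := by
        simp [sub_self, hr.le]
      have hcard : (0 : ℝ) < ((Finset.univ.filter fun j => |x i - x j| ≤ r).card : ℝ) := by
        exact_mod_cast Finset.card_pos.mpr ⟨i, hmem⟩
      have hinv : (((Finset.univ.filter fun j => |x i - x j| ≤ r).card : ℝ))⁻¹ ≠ 0 :=
        inv_ne_zero (ne_of_gt hcard)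
      exact (mul_eq_zero.mp (h i)).resolve_left hinv
    have key : ∀ i j : Fin 3, x i < x j → x j - x i ≤ r → False := by
      intro i j hij hle
      obtain ⟨m, -, hm⟩ := Finset.exists_min_image Finset.univ x ⟨i, Finset.mem_univ i⟩
      obtain ⟨M, -, hM⟩ := Finset.exists_max_image Finset.univ x ⟨i, Finset.mem_univ i⟩
      have hmi := hm i (Finset.mem_univ i)
      have hmj := hm j (Finset.mem_univ j)
      have hMi := hM i (Finset.mem_univ i)
      have hMj := hM j (Finset.mem_univ j)
      by_cases h1 : x j - x m ≤ r
      · have hpos : 0 < ∑ k ∈ Finset.univ.filter (fun k => |x m - x k| ≤ r), (x k - x m) := by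
          apply Finset.sum_pos'
          · intro k _
            have := hm k (Finset.mem_univ k); linarith
          · refine ⟨j, ?_, by linarith⟩
            simp only [Finset.mem_filter, Finset.mem_univ, true_and]
            rw [abs_sub_comm, abs_of_nonneg (by linarith)]
            exact h1
        linarith [hS m]
      · by_cases h2 : x M - x i ≤ r
        · have hpos : 0 < ∑ k ∈ Finset.univ.filter (fun k => |x M - x k| ≤ r), (x M - x k) := by
            apply Finset.sum_pos'
            · intro k _
              have := hM k (Finset.mem_univ k); linarith
            · refine ⟨i, ?_, by linarith⟩
              simp only [Finset.mem_filter, Finset.mem_univ, true_and]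
              rw [abs_of_nonneg (by linarith)]
              exact h2
          have hzero : ∑ k ∈ Finset.univ.filter (fun k => |x M - x k| ≤ r), (x M - x k) = 0 := by
            have := hS M
            have : ∑ k ∈ Finset.univ.filter (fun k => |x M - x k| ≤ r), (x M - x k)
                = -∑ k ∈ Finset.univ.filter (fun k => |x M - x k| ≤ r), (x k - x M) := by
              rw [← Finset.sum_neg_distrib]
              exact Finset.sum_congr rfl (fun k _ => by ring)
            rw [this, hS M, neg_zero]
          linarith
        · -- four pairwise distinct indices in Fin 3, contradiction
          have hxm : x m < x i := by linarith
          have hxM : x j < x M := by linarith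
          have ne : ∀ a b : Fin 3, x a < x b → a.val ≠ b.val := by
            intro a b hab hval
            have : a = b := Fin.val_inj.mp hval
            subst this; exact lt_irrefl _ hab
          have h1 := ne m i hxm
          have h2 := ne m j (lt_trans hxm hij)
          have h3 := ne m M (lt_trans hxm (lt_trans hij hxM))
          have h4 := ne i j hij
          have h5 := ne i M (lt_trans hij hxM)
          have h6 := ne j M hxM
          have := m.isLt; have := i.isLt; have := j.isLt; have := M.isLt
          omega
    intro i j
    by_contra hc
    push_neg at hc
    obtain ⟨hne, habs⟩ := hc
    have := abs_le.mp habs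
    rcases hne.lt_or_gt with hlt | hlt
    · exact key i j hlt (by linarith [this.1])
    · exact key j i hlt (by linarith [this.2])
  · intro h i
    apply mul_eq_zero_of_right
    apply Finset.sum_eq_zero
    intro j hj
    simp only [Finset.mem_filter, Finset.mem_univ, true_and] at hj
    rcases h i j with heq | hgt
    · rw [heq, sub_self]
    · linarith
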